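/- Let G be a 4-connected planar triangulation and let S be an independent set in G that saturates no 4-cycle and no 5-cycle of G. Let u, u' in S be distinct and let D_u and D_{u'} be 4-cycles of G with u in V(D_u) and u' in V(D_{u'}). Then |V(D_u) intersect V(D_{u'})| <= 2, no vertex of V(D_u) intersect V(D_{u'}) lies in S, and if V(D_u) intersect V(D_{u'}) consists of two vertices a and b, then ab is an edge of both D_u and D_{u'}. -/

import Mathlib

open SimpleGraph

variable {V : Type}

/-- The degree of a vertex, as the cardinality of its neighbour set. -/
noncomputable def vdeg (G : SimpleGraph V) (v : V) : ℕ := (G.neighborSet v).ncard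

/-- A graph is `k`-connected if it has more than `k` vertices and remains connected
whenever fewer than `k` vertices are removed. -/
def KConnected [Fintype V] (k : ℕ) (G : SimpleGraph V) : Prop :=
  k < Fintype.card V ∧
    ∀ S : Finset V, S.card < k → (G.induce ((↑S : Set V)ᶜ)).Connected

/-- `S` is an independent set of vertices. -/
def IndepSet (G : SimpleGraph V) (S : Set V) : Prop :=
  ∀ ⦃a⦄, a ∈ S → ∀ ⦃b⦄, b ∈ S → ¬ G.Adj a b

/-- `H` is a minor of `G` (branch-set definition). -/
def HasMinor {W : Type} (G : SimpleGraph V) (H : SimpleGraph W) : Prop :=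
  ∃ f : W → Set V,
    (∀ w, (f w).Nonempty) ∧
    (∀ w, (G.induce (f w)).Connected) ∧
    (∀ w₁ w₂, w₁ ≠ w₂ → Disjoint (f w₁) (f w₂)) ∧
    (∀ w₁ w₂, H.Adj w₁ w₂ → ∃ v₁ ∈ f w₁, ∃ v₂ ∈ f w₂, G.Adj v₁ v₂)

/-- Planarity, via Wagner's characterization: no `K₅` and no `K₃,₃` minor. -/
def IsPlanar (G : SimpleGraph V) : Prop :=
  ¬ HasMinor G (⊤ : SimpleGraph (Fin 5)) ∧
    ¬ HasMinor G (completeBipartiteGraph (Fin 3) (Fin 3))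

/-- Outerplanarity: no `K₄` and no `K₂,₃` minor. -/
def IsOuterplanarGraph {W : Type} (H : SimpleGraph W) : Prop :=
  ¬ HasMinor H (⊤ : SimpleGraph (Fin 4)) ∧
    ¬ HasMinor H (completeBipartiteGraph (Fin 2) (Fin 3))

/-- A planar triangulation: an edge-maximal planar graph on at least 3 vertices,
equivalently a planar graph with `3n - 6` edges. -/
def IsPlanarTriangulation [Fintype V] (G : SimpleGraph V) : Prop :=
  3 ≤ Fintype.card V ∧ IsPlanar G ∧
    (G.edgeSet.ncard : ℤ) = 3 * (Fintype.card V : ℤ) - 6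

/-- `p` is a Hamiltonian path of the subgraph of `G` induced on the vertex set `A`:
a path in `G` whose support is exactly `A`. -/
def IsHamPathOn (G : SimpleGraph V) (A : Set V) {a b : V} (p : G.Walk a b) : Prop :=
  p.IsPath ∧ ∀ x, x ∈ p.support ↔ x ∈ A

/-- There are at least two Hamiltonian paths between `a` and `b` in the subgraph of `G`
induced on the vertex set `A`. -/
def TwoHamPathsOn (G : SimpleGraph V) (A : Set V) (a b : V) : Prop :=
  ∃ p q : G.Walk a b, IsHamPathOn G A p ∧ IsHamPathOn G A q ∧ p ≠ q

/-- The number of (distinct, i.e. with distinct edge sets) Hamiltonian cycles of `G`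
containing all edges of `E₀`. -/
noncomputable def hamCycleCountThrough (G : SimpleGraph V) (E₀ : Set (Sym2 V)) : ℕ :=
  {E : Set (Sym2 V) | ∃ (v : V) (c : G.Walk v v), c.IsCycle ∧ (∀ x, x ∈ c.support) ∧
    (∀ e ∈ E₀, e ∈ c.edges) ∧ E = {e | e ∈ c.edges}}.ncard

/-- The number of Hamiltonian cycles of `G`. -/
noncomputable def hamCycleCount (G : SimpleGraph V) : ℕ := hamCycleCountThrough G ∅

/-- The distance between `x` and `y` in `G` is at least `k`
(every walk from `x` to `y` has length at least `k`). -/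
def DistAtLeast (G : SimpleGraph V) (x y : V) (k : ℕ) : Prop :=
  ∀ p : G.Walk x y, k ≤ p.length

/-- The link `A_u` of a vertex `u` of degree at most 6: if `deg u = 4`, the set of
edges of `G` with both ends in `N(u)`; if `deg u ∈ {5,6}`, the set of edges `e`
incident with `u` such that `G - e` is 4-connected. -/
def link [Fintype V] (G : SimpleGraph V) (u : V) : Set (Sym2 V) :=
  {e | e ∈ G.edgeSet ∧
    ((vdeg G u = 4 ∧ ∀ v ∈ e, v ∈ G.neighborSet u) ∨
     (vdeg G u ≠ 4 ∧ u ∈ e ∧ KConnected 4 (G.deleteEdges {e})))}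

/-- `S` saturates some `k`-cycle of `G`: there is a `k`-cycle `C` with `|S ∩ V(C)| = 2`. -/
def Saturates (G : SimpleGraph V) (S : Set V) (k : ℕ) : Prop :=
  ∃ (v : V) (c : G.Walk v v), c.IsCycle ∧ c.length = k ∧
    (S ∩ {x | x ∈ c.support}).ncard = 2

/-- `S` saturates some diamond-6-cycle of `G`: there is a subgraph of `G` isomorphic to
the diamond-6-cycle (crucial vertices `x i`, `y i`, hub vertices `k i`) such that `S`
contains three of its crucial vertices. -/
def SaturatesDiamond6 (G : SimpleGraph V) (S : Set V) : Prop :=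
  ∃ x y k : Fin 3 → V,
    List.Nodup [x 0, y 0, x 1, y 1, x 2, y 2, k 0, k 1, k 2] ∧
    (∀ i, G.Adj (x i) (y i)) ∧
    (∀ i, G.Adj (x i) (k i) ∧ G.Adj (y i) (k i) ∧
          G.Adj (x i) (k (i + 1)) ∧ G.Adj (y i) (k (i + 1))) ∧
    3 ≤ (S ∩ ({x 0, y 0, x 1, y 1, x 2, y 2} : Set V)).ncard

/-- `G` has a separating triangle: a 3-cycle whose vertex deletion disconnects `G`. -/
def HasSeparatingTriangle (G : SimpleGraph V) : Prop :=
  ∃ a b c : V, G.Adj a b ∧ G.Adj b c ∧ G.Adj a c ∧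
    ¬ (G.induce {v | v ≠ a ∧ v ≠ b ∧ v ≠ c}).Connected

/-- A combinatorial plane graph: a graph together with a type of faces, a distinguished
(outer, i.e. infinite) face, and incidence relations of vertices and edges with faces. -/
structure PlaneGraph (V : Type) where
  graph : SimpleGraph V
  Face : Type
  outer : Face
  vertexOn : V → Face → Prop
  edgeOn : Sym2 V → Face → Prop
  edgeOn_mem : ∀ e f, edgeOn e f → e ∈ graph.edgeSet
  vertexOn_of_edgeOn : ∀ e f, edgeOn e f → ∀ v, v ∈ e → vertexOn v f

/-- A vertex `y` and an edge `e` are cofacial: incident with a common face. -/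
def PlaneGraph.Cofacial (P : PlaneGraph V) (y : V) (e : Sym2 V) : Prop :=
  ∃ f, P.vertexOn y f ∧ P.edgeOn e f

/-- The face `f` is bounded by a triangle. -/
def PlaneGraph.IsTriFace (P : PlaneGraph V) (f : P.Face) : Prop :=
  ∃ a b c : V, a ≠ b ∧ a ≠ c ∧ b ≠ c ∧
    P.graph.Adj a b ∧ P.graph.Adj b c ∧ P.graph.Adj a c ∧
    (∀ v, P.vertexOn v f ↔ v = a ∨ v = b ∨ v = c) ∧
    (∀ e, P.edgeOn e f ↔ e = s(a, b) ∨ e = s(b, c) ∨ e = s(a, c))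

/-- A near triangulation: every face except possibly the outer one is a triangle. -/
def PlaneGraph.IsNearTriangulation (P : PlaneGraph V) : Prop :=
  ∀ f, f ≠ P.outer → P.IsTriFace f

/-- The outer face of `P` is bounded by the 4-cycle `u v w x u`. -/
def PlaneGraph.OuterCycle4 (P : PlaneGraph V) (u v w x : V) : Prop :=
  [u, v, w, x].Nodup ∧
  P.graph.Adj u v ∧ P.graph.Adj v w ∧ P.graph.Adj w x ∧ P.graph.Adj x u ∧
  (∀ y, P.vertexOn y P.outer ↔ y = u ∨ y = v ∨ y = w ∨ y = x) ∧
  (∀ e, P.edgeOn e P.outer ↔ e = s(u, v) ∨ e = s(v, w) ∨ e = s(w, x) ∨ e = s(x, u))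

/-- `H` is a cycle (as a graph): it has a Hamiltonian cycle using all of its edges. -/
def IsCycleGraph {W : Type} (H : SimpleGraph W) : Prop :=
  ∃ (v : W) (c : H.Walk v v), c.IsCycle ∧ (∀ x, x ∈ c.support) ∧
    ∀ e ∈ H.edgeSet, e ∈ c.edges

/-- The subgraph of `G` on the vertex set `B` (kept on the ambient vertex type;
vertices outside `B` become isolated). -/
def restrictTo (G : SimpleGraph V) (B : Set V) : SimpleGraph V where
  Adj a b := a ∈ B ∧ b ∈ B ∧ G.Adj a b
  symm := ⟨fun _ _ h => ⟨h.2.1, h.1, h.2.2.symm⟩⟩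
  loopless := ⟨fun _ h => G.irrefl h.2.2⟩

/-- The graph obtained from `G` by contracting the set `A` to the single vertex `z`
(with `z ∈ A` serving as the new vertex; the other vertices of `A` become isolated). -/
def contractSetTo (G : SimpleGraph V) (A : Set V) (z : V) : SimpleGraph V :=
  SimpleGraph.fromRel (fun a b =>
    (a ∉ A ∧ b ∉ A ∧ G.Adj a b) ∨
    (a = z ∧ b ∉ A ∧ ∃ w ∈ A, G.Adj w b))

/-- `c` is a separating 4-cycle of `G` and `A` is the vertex set of its interior:
`Vclosure(c) = V(c) ∪ A`. -/
def IsSeparating4CycleWithInside (G : SimpleGraph V) {v : V} (c : G.Walk v v) (A : Set V)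
    : Prop :=
  c.IsCycle ∧ c.length = 4 ∧
  A.Nonempty ∧ (∀ a ∈ A, a ∉ c.support) ∧
  (G.induce A).Connected ∧
  (∀ a ∈ A, ∀ b, G.Adj a b → b ∈ A ∨ b ∈ c.support) ∧
  {x | x ∉ A ∧ x ∉ c.support}.Nonempty

/-- The alternative conclusion of Lemma 4.2 for a graph `H` with relevant vertex set `W`,
outer 4-cycle vertex set `C` and contracted vertex `z`: either (i) for all distinct
`a, b ∈ C`, `H - (C \ {a,b})` has at least two Hamiltonian `a`–`b` paths, or (ii) there are
distinct `a, b ∈ C` for which there is a unique such path `P`, and for every other pair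
`c, d ∈ C` there are at least two Hamiltonian `c`–`d` paths, each avoiding an edge of `P`
incident with `z`. -/
def TwoPathOrUnique (H : SimpleGraph V) (C W : Set V) (z : V) : Prop :=
  (∀ a b : V, a ∈ C → b ∈ C → a ≠ b → TwoHamPathsOn H (W \ (C \ {a, b})) a b) ∨
  (∃ a b : V, a ∈ C ∧ b ∈ C ∧ a ≠ b ∧
    ∃ p : H.Walk a b, IsHamPathOn H (W \ (C \ {a, b})) p ∧
      (∀ q : H.Walk a b, IsHamPathOn H (W \ (C \ {a, b})) q → q = p) ∧
      ∀ c d : V, c ∈ C → d ∈ C → c ≠ d → ({c, d} : Set V) ≠ ({a, b} : Set V) →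
        ∃ q₁ q₂ : H.Walk c d,
          IsHamPathOn H (W \ (C \ {c, d})) q₁ ∧ IsHamPathOn H (W \ (C \ {c, d})) q₂ ∧
          q₁ ≠ q₂ ∧
          (∃ e ∈ p.edges, z ∈ e ∧ e ∉ q₁.edges) ∧ (∃ e ∈ p.edges, z ∈ e ∧ e ∉ q₂.edges))

/-- Chordality: every cycle of length at least 4 has a chord. -/
def Chordal {W : Type} (H : SimpleGraph W) : Prop :=
  ∀ (v : W) (c : H.Walk v v), c.IsCycle → 4 ≤ c.length →
    ∃ a b, a ∈ c.support ∧ b ∈ c.support ∧ H.Adj a b ∧ s(a, b) ∉ c.edges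

section Aux

lemma cycle4_struct {G : SimpleGraph V} {v : V} {c : G.Walk v v} (hc : c.IsCycle)
    (h4 : c.length = 4) :
    ∃ a b d : V, G.Adj v a ∧ G.Adj a b ∧ G.Adj b d ∧ G.Adj d v ∧
      a ≠ v ∧ b ≠ v ∧ d ≠ v ∧ a ≠ b ∧ a ≠ d ∧ b ≠ d ∧
      (∀ x, x ∈ c.support ↔ x = v ∨ x = a ∨ x = b ∨ x = d) ∧
      (∀ e, e ∈ c.edges ↔ e = s(v,a) ∨ e = s(a,b) ∨ e = s(b,d) ∨ e = s(d,v)) := by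
  cases c with
  | nil => simp at h4
  | cons h1 p =>
    cases p with
    | nil => simp at h4
    | cons h2 p =>
      cases p with
      | nil => simp at h4
      | cons h3 p =>
        cases p with
        | nil => simp at h4
        | cons h4' p =>
          cases p with
          | cons h5 p => simp at h4
          | nil =>
            have hn := hc.2
            simp [List.nodup_cons] at hn
            refine ⟨_, _, _, h1, h2, h3, h4', ?_, ?_, ?_, ?_, ?_, ?_, ?_, ?_⟩
            · tauto
            · tauto
            · tauto
            · tauto
            · tauto
            · tauto
            · intro x; simp [Walk.support_cons]; tauto
            · intro e; simp [Walk.edges_cons]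

lemma cycle4_thru {G : SimpleGraph V} {v u : V} {c : G.Walk v v} (hc : c.IsCycle)
    (h4 : c.length = 4) (hu : u ∈ c.support) :
    ∃ p q r : V, G.Adj u p ∧ G.Adj p q ∧ G.Adj q r ∧ G.Adj r u ∧
      p ≠ u ∧ q ≠ u ∧ r ≠ u ∧ p ≠ q ∧ p ≠ r ∧ q ≠ r ∧
      (∀ x, x ∈ c.support ↔ x = u ∨ x = p ∨ x = q ∨ x = r) ∧
      (∀ e, e ∈ c.edges ↔ e = s(u,p) ∨ e = s(p,q) ∨ e = s(q,r) ∨ e = s(r,u)) := by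
  obtain ⟨a, b, d, A1, A2, A3, A4, n1, n2, n3, n4, n5, n6, hsupp, hedge⟩ :=
    cycle4_struct hc h4
  rcases (hsupp u).1 hu with rfl | rfl | rfl | rfl
  · refine ⟨a, b, d, A1, A2, A3, A4, ?_, ?_, ?_, ?_, ?_, ?_,
      by intro x; rw [hsupp x] <;> tauto, by intro e; rw [hedge e] <;> tauto⟩ <;> tauto
  · refine ⟨b, d, v, A2, A3, A4, A1, ?_, ?_, ?_, ?_, ?_, ?_,
      by intro x; rw [hsupp x] <;> tauto, by intro e; rw [hedge e] <;> tauto⟩ <;> tauto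
  · refine ⟨d, v, a, A3, A4, A1, A2, ?_, ?_, ?_, ?_, ?_, ?_,
      by intro x; rw [hsupp x] <;> tauto, by intro e; rw [hedge e] <;> tauto⟩ <;> tauto
  · refine ⟨v, a, b, A4, A1, A2, A3, ?_, ?_, ?_, ?_, ?_, ?_,
      by intro x; rw [hsupp x] <;> tauto, by intro e; rw [hedge e] <;> tauto⟩ <;> tauto

lemma no_three {G : SimpleGraph V} {S : Set V} (hS : IndepSet G S)
    {v a b d x1 x2 x3 : V}
    (h1 : G.Adj v a) (h2 : G.Adj a b) (h3 : G.Adj b d) (h4 : G.Adj d v)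
    (m1 : x1 = v ∨ x1 = a ∨ x1 = b ∨ x1 = d)
    (m2 : x2 = v ∨ x2 = a ∨ x2 = b ∨ x2 = d)
    (m3 : x3 = v ∨ x3 = a ∨ x3 = b ∨ x3 = d)
    (d12 : x1 ≠ x2) (d13 : x1 ≠ x3) (d23 : x2 ≠ x3)
    (s1 : x1 ∈ S) (s2 : x2 ∈ S) (s3 : x3 ∈ S) : False := by
  have h1' := h1.symm; have h2' := h2.symm; have h3' := h3.symm; have h4' := h4.symm
  rcases m1 with rfl | rfl | rfl | rfl <;> rcases m2 with rfl | rfl | rfl | rfl <;>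
    rcases m3 with rfl | rfl | rfl | rfl <;>
    first
      | exact d12 rfl
      | exact d13 rfl
      | exact d23 rfl
      | exact hS s1 s2 (by assumption)
      | exact hS s1 s3 (by assumption)
      | exact hS s2 s3 (by assumption)

lemma cycle4_struct' {G : SimpleGraph V} {v : V} {c : G.Walk v v} (hc : c.IsCycle)
    (h4 : c.length = 4) :
    ∃ a b d : V, G.Adj v a ∧ G.Adj a b ∧ G.Adj b d ∧ G.Adj d v ∧
      (∀ x, x ∈ c.support ↔ x = v ∨ x = a ∨ x = b ∨ x = d) := by
  obtain ⟨a, b, d, A1, A2, A3, A4, _, _, _, _, _, _, hs, _⟩ := cycle4_struct hc h4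
  exact ⟨a, b, d, A1, A2, A3, A4, hs⟩

lemma sat_of_two {G : SimpleGraph V} {S : Set V} (hS : IndepSet G S)
    {v : V} {c : G.Walk v v} (hc : c.IsCycle) (h4 : c.length = 4)
    {x1 x2 : V} (s1 : x1 ∈ S) (s2 : x2 ∈ S) (hne : x1 ≠ x2)
    (m1 : x1 ∈ c.support) (m2 : x2 ∈ c.support) : Saturates G S 4 := by
  obtain ⟨a, b, d, A1, A2, A3, A4, hsupp⟩ := cycle4_struct' hc h4
  refine ⟨v, c, hc, h4, ?_⟩
  have : S ∩ {x | x ∈ c.support} = {x1, x2} := by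
    ext y
    simp only [Set.mem_inter_iff, Set.mem_setOf_eq, Set.mem_insert_iff,
      Set.mem_singleton_iff]
    constructor
    · rintro ⟨yS, ysupp⟩
      by_contra hy
      push_neg at hy
      exact no_three hS A1 A2 A3 A4 ((hsupp x1).1 m1) ((hsupp x2).1 m2)
        ((hsupp y).1 ysupp) hne (Ne.symm hy.1) (Ne.symm hy.2) s1 s2 yS
    · rintro (rfl | rfl)
      exacts [⟨s1, m1⟩, ⟨s2, m2⟩]
  rw [this, Set.ncard_pair hne]

lemma saturates4_build {G : SimpleGraph V} {S : Set V}
    {z1 z2 z3 z4 : V}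
    (h1 : G.Adj z1 z2) (h2 : G.Adj z2 z3) (h3 : G.Adj z3 z4) (h4 : G.Adj z4 z1)
    (d12 : z1 ≠ z2) (d13 : z1 ≠ z3) (d14 : z1 ≠ z4)
    (d23 : z2 ≠ z3) (d24 : z2 ≠ z4) (d34 : z3 ≠ z4)
    (s1 : z1 ∈ S) (s3 : z3 ∈ S) (n2 : z2 ∉ S) (n4 : z4 ∉ S) :
    Saturates G S 4 := by
  refine ⟨z1, .cons h1 (.cons h2 (.cons h3 (.cons h4 .nil))), ?_, rfl, ?_⟩
  · rw [Walk.isCycle_def, Walk.isTrail_def]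
    refine ⟨?_, by simp, ?_⟩
    · simp [List.nodup_cons, Sym2.eq_iff]
      tauto
    · simp [List.nodup_cons]
      tauto
  · have : S ∩ {x | x ∈ (Walk.cons h1 (.cons h2 (.cons h3 (.cons h4 .nil)))).support}
        = {z1, z3} := by
      ext y
      simp only [Set.mem_inter_iff, Set.mem_setOf_eq, Walk.support_cons,
        Walk.support_nil, List.mem_cons, List.mem_singleton, Set.mem_insert_iff,
        Set.mem_singleton_iff]
      constructor
      · rintro ⟨yS, rfl | rfl | rfl | rfl | rfl | h⟩ <;> tauto
      · rintro (rfl | rfl) <;> tauto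
    rw [this, Set.ncard_pair d13]

lemma saturates5_build {G : SimpleGraph V} {S : Set V}
    {z1 z2 z3 z4 z5 : V}
    (h1 : G.Adj z1 z2) (h2 : G.Adj z2 z3) (h3 : G.Adj z3 z4) (h4 : G.Adj z4 z5)
    (h5 : G.Adj z5 z1)
    (d12 : z1 ≠ z2) (d13 : z1 ≠ z3) (d14 : z1 ≠ z4) (d15 : z1 ≠ z5)
    (d23 : z2 ≠ z3) (d24 : z2 ≠ z4) (d25 : z2 ≠ z5)
    (d34 : z3 ≠ z4) (d35 : z3 ≠ z5) (d45 : z4 ≠ z5)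
    (s1 : z1 ∈ S) (s3 : z3 ∈ S) (n2 : z2 ∉ S) (n4 : z4 ∉ S) (n5 : z5 ∉ S) :
    Saturates G S 5 := by
  refine ⟨z1, .cons h1 (.cons h2 (.cons h3 (.cons h4 (.cons h5 .nil)))), ?_, rfl, ?_⟩
  · rw [Walk.isCycle_def, Walk.isTrail_def]
    refine ⟨?_, by simp, ?_⟩
    · simp [List.nodup_cons, Sym2.eq_iff]
      tauto
    · simp [List.nodup_cons]
      tauto
  · have : S ∩ {x | x ∈ (Walk.cons h1 (.cons h2 (.cons h3 (.cons h4
        (.cons h5 .nil))))).support} = {z1, z3} := by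
      ext y
      simp only [Set.mem_inter_iff, Set.mem_setOf_eq, Walk.support_cons,
        Walk.support_nil, List.mem_cons, List.mem_singleton, Set.mem_insert_iff,
        Set.mem_singleton_iff]
      constructor
      · rintro ⟨yS, rfl | rfl | rfl | rfl | rfl | rfl | h⟩ <;> tauto
      · rintro (rfl | rfl) <;> tauto
    rw [this, Set.ncard_pair d13]

lemma key3 {G : SimpleGraph V} {S : Set V} (hS : IndepSet G S)
    (h4c : ¬ Saturates G S 4) (h5c : ¬ Saturates G S 5)
    {u u' : V} (hu : u ∈ S) (hu' : u' ∈ S) (hne : u ≠ u')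
    {v v' : V} {c : G.Walk v v} {c' : G.Walk v' v'}
    (hc : c.IsCycle) (hc4 : c.length = 4) (huc : u ∈ c.support)
    (hc' : c'.IsCycle) (hc'4 : c'.length = 4) (huc' : u' ∈ c'.support)
    {a b : V} (hab : a ≠ b)
    (hI : ({x | x ∈ c.support} ∩ {x | x ∈ c'.support}) = ({a, b} : Set V)) :
    s(a, b) ∈ c.edges := by
  have F1 : u ∉ c'.support := fun h => h4c (sat_of_two hS hc' hc'4 hu hu' hne h huc')
  have F2 : u' ∉ c.support := fun h => h4c (sat_of_two hS hc hc4 hu hu' hne huc h)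
  have notS : ∀ x, x ∈ c.support → x ∈ c'.support → x ∉ S := by
    intro x hx hx' hxS
    exact h4c (sat_of_two hS hc hc4 hu hxS (fun e => F1 (e ▸ hx')) huc hx)
  have notS' : ∀ x, x ∈ c'.support → x ≠ u' → x ∉ S := by
    intro x hx hxu' hxS
    exact h4c (sat_of_two hS hc' hc'4 hu' hxS (Ne.symm hxu') huc' hx)
  obtain ⟨p1, q1, r1, A1, A2, A3, A4, e1u, e2u, e3u, e12, e13, e23, suppIff1, edgeIff1⟩ :=
    cycle4_thru hc hc4 huc
  obtain ⟨p2, q2, r2, B1, B2, B3, B4, f1u, f2u, f3u, f12, f13, f23, suppIff2, edgeIff2⟩ :=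
    cycle4_thru hc' hc'4 huc'
  have memp1 : p1 ∈ c.support := (suppIff1 p1).2 (Or.inr (Or.inl rfl))
  have memq1 : q1 ∈ c.support := (suppIff1 q1).2 (Or.inr (Or.inr (Or.inl rfl)))
  have memr1 : r1 ∈ c.support := (suppIff1 r1).2 (Or.inr (Or.inr (Or.inr rfl)))
  have memp2 : p2 ∈ c'.support := (suppIff2 p2).2 (Or.inr (Or.inl rfl))
  have memq2 : q2 ∈ c'.support := (suppIff2 q2).2 (Or.inr (Or.inr (Or.inl rfl)))
  have memr2 : r2 ∈ c'.support := (suppIff2 r2).2 (Or.inr (Or.inr (Or.inr rfl)))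
  have hfalse : ({x | x ∈ c.support} ∩ {x | x ∈ c'.support}) ≠ ({p1, r1} : Set V) := by
    intro hpr
    have hq1c' : q1 ∉ c'.support := by
      intro h
      have : q1 ∈ ({p1, r1} : Set V) := by rw [← hpr]; exact ⟨memq1, h⟩
      simp only [Set.mem_insert_iff, Set.mem_singleton_iff] at this
      rcases this with e | e
      · exact e12 e.symm
      · exact e23 e
    have hp1c' : p1 ∈ c'.support := by
      have : p1 ∈ ({x | x ∈ c.support} ∩ {x | x ∈ c'.support}) := by rw [hpr]; simp
      exact this.2
    have hr1c' : r1 ∈ c'.support := by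
      have : r1 ∈ ({x | x ∈ c.support} ∩ {x | x ∈ c'.support}) := by rw [hpr]; simp
      exact this.2
    have np1 : p1 ∉ S := notS p1 memp1 hp1c'
    have nr1 : r1 ∉ S := notS r1 memr1 hr1c'
    have dp1u' : p1 ≠ u' := fun e => F2 (e ▸ memp1)
    have dr1u' : r1 ≠ u' := fun e => F2 (e ▸ memr1)
    have mp : p1 = p2 ∨ p1 = q2 ∨ p1 = r2 :=
      ((suppIff2 p1).1 hp1c').resolve_left dp1u'
    have mr : r1 = p2 ∨ r1 = q2 ∨ r1 = r2 :=
      ((suppIff2 r1).1 hr1c').resolve_left dr1u'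
    rcases mp with eP | eP | eP
    · rcases mr with eR | eR | eR
      · exact e13 (eP.trans eR.symm)
      · -- case 1: p1 = p2, r1 = q2
        have B1' : G.Adj u' p1 := by rw [eP]; exact B1
        have B3' : G.Adj r1 r2 := by rw [eR]; exact B3
        have f13' : p1 ≠ r2 := by rw [eP]; exact f13
        have f23' : r1 ≠ r2 := by rw [eR]; exact f23
        have hr2c : r2 ∉ c.support := by
          intro h
          have : r2 ∈ ({p1, r1} : Set V) := by rw [← hpr]; exact ⟨h, memr2⟩
          simp only [Set.mem_insert_iff, Set.mem_singleton_iff] at this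
          rcases this with e | e
          · exact f13' e.symm
          · exact f23' e.symm
        exact h5c (saturates5_build A1 B1'.symm B4.symm B3'.symm A4
          e1u.symm hne (fun e => hr2c (e ▸ huc)) e3u.symm dp1u' f13' e13
          f3u.symm dr1u'.symm f23'.symm
          hu hu' np1 (notS' r2 memr2 f3u) nr1)
      · -- case 2: p1 = p2, r1 = r2
        have B1' : G.Adj u' p1 := by rw [eP]; exact B1
        have B4' : G.Adj r1 u' := by rw [eR]; exact B4
        exact h4c (saturates4_build A1 B1'.symm B4'.symm A4
          e1u.symm hne e3u.symm dp1u' e13 dr1u'.symm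
          hu hu' np1 nr1)
    · rcases mr with eR | eR | eR
      · -- case 3: p1 = q2, r1 = p2
        have B1' : G.Adj u' r1 := by rw [eR]; exact B1
        have B3' : G.Adj p1 r2 := by rw [eP]; exact B3
        have f13' : r1 ≠ r2 := by rw [eR]; exact f13
        have f23' : p1 ≠ r2 := by rw [eP]; exact f23
        have hr2c : r2 ∉ c.support := by
          intro h
          have : r2 ∈ ({p1, r1} : Set V) := by rw [← hpr]; exact ⟨h, memr2⟩
          simp only [Set.mem_insert_iff, Set.mem_singleton_iff] at this
          rcases this with e | e
          · exact f23' e.symm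
          · exact f13' e.symm
        exact h5c (saturates5_build A4.symm B1'.symm B4.symm B3'.symm A1.symm
          e3u.symm hne (fun e => hr2c (e ▸ huc)) e1u.symm dr1u' f13' e13.symm
          f3u.symm dp1u'.symm f23'.symm
          hu hu' nr1 (notS' r2 memr2 f3u) np1)
      · exact e13 (eP.trans eR.symm)
      · -- case 4: p1 = q2, r1 = r2
        have B2' : G.Adj p2 p1 := by rw [eP]; exact B2
        have B4' : G.Adj r1 u' := by rw [eR]; exact B4
        have f12' : p2 ≠ p1 := by rw [eP]; exact f12
        have f13' : p2 ≠ r1 := by rw [eR]; exact f13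
        have hp2c : p2 ∉ c.support := by
          intro h
          have : p2 ∈ ({p1, r1} : Set V) := by rw [← hpr]; exact ⟨h, memp2⟩
          simp only [Set.mem_insert_iff, Set.mem_singleton_iff] at this
          rcases this with e | e
          · exact f12' e
          · exact f13' e
        exact h5c (saturates5_build B4'.symm A4 A1 B2'.symm B1.symm
          dr1u'.symm hne.symm dp1u'.symm f1u.symm e3u e13.symm
          (fun e => hp2c (e ▸ memr1)) e1u.symm (fun e => hp2c (e ▸ huc)) f12'.symm
          hu' hu nr1 np1 (notS' p2 memp2 f1u))
    · rcases mr with eR | eR | eR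
      · -- case 5: p1 = r2, r1 = p2
        have B1' : G.Adj u' r1 := by rw [eR]; exact B1
        have B4' : G.Adj p1 u' := by rw [eP]; exact B4
        exact h4c (saturates4_build A1 B4' B1' A4
          e1u.symm hne e3u.symm dp1u' e13 dr1u'.symm
          hu hu' np1 nr1)
      · -- case 6: p1 = r2, r1 = q2
        have B2' : G.Adj p2 r1 := by rw [eR]; exact B2
        have B3' : G.Adj r1 p1 := by rw [eR, eP]; exact B3
        have B4' : G.Adj p1 u' := by rw [eP]; exact B4
        have f12' : p2 ≠ r1 := by rw [eR]; exact f12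
        have f13' : p2 ≠ p1 := by rw [eP]; exact f13
        have hp2c : p2 ∉ c.support := by
          intro h
          have : p2 ∈ ({p1, r1} : Set V) := by rw [← hpr]; exact ⟨h, memp2⟩
          simp only [Set.mem_insert_iff, Set.mem_singleton_iff] at this
          rcases this with e | e
          · exact f13' e
          · exact f12' e
        exact h5c (saturates5_build B4'.symm A1.symm A4.symm B2'.symm B1.symm
          dp1u'.symm hne.symm dr1u'.symm f1u.symm e1u e13
          (fun e => hp2c (e ▸ memp1)) e3u.symm (fun e => hp2c (e ▸ huc)) f12'.symm
          hu' hu np1 nr1 (notS' p2 memp2 f1u))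
      · exact e13 (eP.trans eR.symm)
  have haI : a ∈ ({x | x ∈ c.support} ∩ {x | x ∈ c'.support}) := by rw [hI]; simp
  have hbI : b ∈ ({x | x ∈ c.support} ∩ {x | x ∈ c'.support}) := by rw [hI]; simp
  have hau : a ≠ u := fun e => F1 (e ▸ haI.2)
  have hbu : b ≠ u := fun e => F1 (e ▸ hbI.2)
  have ma : a = p1 ∨ a = q1 ∨ a = r1 := ((suppIff1 a).1 haI.1).resolve_left hau
  have mb : b = p1 ∨ b = q1 ∨ b = r1 := ((suppIff1 b).1 hbI.1).resolve_left hbu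
  rcases ma with rfl | rfl | rfl <;> rcases mb with rfl | rfl | rfl
  · exact absurd rfl hab
  · exact (edgeIff1 _).2 (Or.inr (Or.inl rfl))
  · exact absurd hI hfalse
  · exact (edgeIff1 _).2 (Or.inr (Or.inl (Sym2.eq_swap)))
  · exact absurd rfl hab
  · exact (edgeIff1 _).2 (Or.inr (Or.inr (Or.inl rfl)))
  · exact absurd (hI.trans (Set.pair_comm a b)) hfalse
  · exact (edgeIff1 _).2 (Or.inr (Or.inr (Or.inl (Sym2.eq_swap))))
  · exact absurd rfl hab


end Aux

/-- Let `G` be a 4-connected planar triangulation, `S` an independent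
set saturating no 4-cycle and no 5-cycle. Let `u ≠ u'` in `S` and `D_u`, `D_{u'}` be
4-cycles containing `u`, `u'` respectively. Then `|V(D_u) ∩ V(D_{u'})| ≤ 2`, no vertex of
`V(D_u) ∩ V(D_{u'})` lies in `S`, and if `V(D_u) ∩ V(D_{u'}) = {a, b}` with `a ≠ b`, then
`ab ∈ E(D_u) ∩ E(D_{u'})`. -/
theorem intersection_of_four_cycles_through_independent_set
    {V : Type} [Fintype V] (G : SimpleGraph V)
    (hG : IsPlanarTriangulation G) (h4 : KConnected 4 G)
    (S : Set V) (hS : IndepSet G S) (h4c : ¬ Saturates G S 4) (h5c : ¬ Saturates G S 5)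
    (u u' : V) (hu : u ∈ S) (hu' : u' ∈ S) (hne : u ≠ u')
    (v v' : V) (c : G.Walk v v) (c' : G.Walk v' v')
    (hc : c.IsCycle) (hc4 : c.length = 4) (huc : u ∈ c.support)
    (hc' : c'.IsCycle) (hc'4 : c'.length = 4) (huc' : u' ∈ c'.support) :
    ({x | x ∈ c.support} ∩ {x | x ∈ c'.support}).ncard ≤ 2 ∧
    (∀ x : V, x ∈ c.support → x ∈ c'.support → x ∉ S) ∧
    (∀ a b : V, a ≠ b →
      ({x | x ∈ c.support} ∩ {x | x ∈ c'.support}) = ({a, b} : Set V) →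
      s(a, b) ∈ c.edges ∧ s(a, b) ∈ c'.edges) := by

  have F1 : u ∉ c'.support := fun h => h4c (sat_of_two hS hc' hc'4 hu hu' hne h huc')
  have F2 : u' ∉ c.support := fun h => h4c (sat_of_two hS hc hc4 hu hu' hne huc h)
  have notS : ∀ x, x ∈ c.support → x ∈ c'.support → x ∉ S := by
    intro x hx hx' hxS
    exact h4c (sat_of_two hS hc hc4 hu hxS (fun e => F1 (e ▸ hx')) huc hx)
  refine ⟨?_, notS, ?_⟩
  · -- |I| ≤ 2
    by_contra hn
    push_neg at hn
    obtain ⟨p1, q1, r1, A1, A2, A3, A4, e1u, e2u, e3u, e12, e13, e23, suppIff1, edgeIff1⟩ :=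
      cycle4_thru hc hc4 huc
    obtain ⟨p2, q2, r2, B1, B2, B3, B4, f1u, f2u, f3u, f12, f13, f23, suppIff2, edgeIff2⟩ :=
      cycle4_thru hc' hc'4 huc'
    have memp1 : p1 ∈ c.support := (suppIff1 p1).2 (Or.inr (Or.inl rfl))
    have memq1 : q1 ∈ c.support := (suppIff1 q1).2 (Or.inr (Or.inr (Or.inl rfl)))
    have memr1 : r1 ∈ c.support := (suppIff1 r1).2 (Or.inr (Or.inr (Or.inr rfl)))
    have memp2 : p2 ∈ c'.support := (suppIff2 p2).2 (Or.inr (Or.inl rfl))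
    have memq2 : q2 ∈ c'.support := (suppIff2 q2).2 (Or.inr (Or.inr (Or.inl rfl)))
    have memr2 : r2 ∈ c'.support := (suppIff2 r2).2 (Or.inr (Or.inr (Or.inr rfl)))
    have hsub : ({x | x ∈ c.support} ∩ {x | x ∈ c'.support}) ⊆ ({p1, q1, r1} : Set V) := by
      rintro x ⟨hx, hx'⟩
      have hxu : x ≠ u := fun e => F1 (e ▸ hx')
      have := ((suppIff1 x).1 hx).resolve_left hxu
      simpa using this
    have hfin : ({p1, q1, r1} : Set V).Finite :=
      (Set.finite_singleton r1).insert q1 |>.insert p1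
    have h3 : ({p1, q1, r1} : Set V).ncard = 3 :=
      Set.ncard_eq_three.mpr ⟨p1, q1, r1, e12, e13, e23, rfl⟩
    have heq : ({x | x ∈ c.support} ∩ {x | x ∈ c'.support}) = ({p1, q1, r1} : Set V) :=
      Set.eq_of_subset_of_ncard_le hsub (by omega) hfin
    -- p1, q1, r1 all lie on c' as well
    have hp1c' : p1 ∈ c'.support := by
      have : p1 ∈ ({x | x ∈ c.support} ∩ {x | x ∈ c'.support}) := by
        rw [heq]; exact Set.mem_insert _ _
      exact this.2
    have hq1c' : q1 ∈ c'.support := by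
      have : q1 ∈ ({x | x ∈ c.support} ∩ {x | x ∈ c'.support}) := by
        rw [heq]; exact Set.mem_insert_of_mem _ (Set.mem_insert _ _)
      exact this.2
    have hr1c' : r1 ∈ c'.support := by
      have : r1 ∈ ({x | x ∈ c.support} ∩ {x | x ∈ c'.support}) := by
        rw [heq]; exact Set.mem_insert_of_mem _ (Set.mem_insert_of_mem _ rfl)
      exact this.2
    have np1 : p1 ∉ S := notS p1 memp1 hp1c'
    have nq1 : q1 ∉ S := notS q1 memq1 hq1c'
    have nr1 : r1 ∉ S := notS r1 memr1 hr1c'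
    have dp1u' : p1 ≠ u' := fun e => F2 (e ▸ memp1)
    have dq1u' : q1 ≠ u' := fun e => F2 (e ▸ memq1)
    have dr1u' : r1 ≠ u' := fun e => F2 (e ▸ memr1)
    have hset : ({p1, q1, r1} : Set V) = ({p2, q2, r2} : Set V) := by
      have hsub2 : ({p1, q1, r1} : Set V) ⊆ ({p2, q2, r2} : Set V) := by
        intro x hx
        simp only [Set.mem_insert_iff, Set.mem_singleton_iff] at hx ⊢
        rcases hx with e | e | e <;> rw [e]
        · exact ((suppIff2 p1).1 hp1c').resolve_left dp1u'
        · exact ((suppIff2 q1).1 hq1c').resolve_left dq1u'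
        · exact ((suppIff2 r1).1 hr1c').resolve_left dr1u'
      have hfin2 : ({p2, q2, r2} : Set V).Finite :=
        (Set.finite_singleton r2).insert q2 |>.insert p2
      have h3' : ({p2, q2, r2} : Set V).ncard = 3 :=
        Set.ncard_eq_three.mpr ⟨p2, q2, r2, f12, f13, f23, rfl⟩
      exact Set.eq_of_subset_of_ncard_le hsub2 (by omega) hfin2
    have mq2 : q2 = p1 ∨ q2 = q1 ∨ q2 = r1 := by
      have : q2 ∈ ({p1, q1, r1} : Set V) := by
        rw [hset]; exact Set.mem_insert_of_mem _ (Set.mem_insert _ _)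
      simpa using this
    have mp2 : p2 = p1 ∨ p2 = q1 ∨ p2 = r1 := by
      have : p2 ∈ ({p1, q1, r1} : Set V) := by rw [hset]; exact Set.mem_insert _ _
      simpa using this
    have mr2 : r2 = p1 ∨ r2 = q1 ∨ r2 = r1 := by
      have : r2 ∈ ({p1, q1, r1} : Set V) := by
        rw [hset]; exact Set.mem_insert_of_mem _ (Set.mem_insert_of_mem _ rfl)
      simpa using this
    rcases mq2 with eQ | eQ | eQ
    · -- q2 = p1 : u' is adjacent to q1 and r1; 5-cycle u' r1 u p1 q1
      have hadj : G.Adj u' q1 ∧ G.Adj u' r1 := by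
        rcases mp2 with e | e | e
        · exact absurd (e.trans eQ.symm) f12
        · rcases mr2 with e' | e' | e'
          · exact absurd (e'.trans eQ.symm).symm f23
          · exact absurd (e.trans e'.symm) f13
          · exact ⟨e ▸ B1, e' ▸ B4.symm⟩
        · rcases mr2 with e' | e' | e'
          · exact absurd (e'.trans eQ.symm).symm f23
          · exact ⟨e' ▸ B4.symm, e ▸ B1⟩
          · exact absurd (e.trans e'.symm) f13
      exact h5c (saturates5_build hadj.2 A4 A1 A2 hadj.1.symm
        dr1u'.symm hne.symm dp1u'.symm dq1u'.symm e3u e13.symm e23.symm e1u.symm e2u.symm e12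
        hu' hu nr1 np1 nq1)
    · -- q2 = q1 : u' adjacent to p1 and r1; 4-cycle u p1 u' r1
      have hadj : G.Adj u' p1 ∧ G.Adj u' r1 := by
        rcases mp2 with e | e | e
        · rcases mr2 with e' | e' | e'
          · exact absurd (e.trans e'.symm) f13
          · exact absurd (e'.trans eQ.symm).symm f23
          · exact ⟨e ▸ B1, e' ▸ B4.symm⟩
        · exact absurd (e.trans eQ.symm) f12
        · rcases mr2 with e' | e' | e'
          · exact ⟨e' ▸ B4.symm, e ▸ B1⟩
          · exact absurd (e'.trans eQ.symm).symm f23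
          · exact absurd (e.trans e'.symm) f13
      exact h4c (saturates4_build A1 hadj.1.symm hadj.2 A4
        e1u.symm hne e3u.symm dp1u' e13 dr1u'.symm
        hu hu' np1 nr1)
    · -- q2 = r1 : u' adjacent to p1 and q1; 5-cycle u p1 u' q1 r1
      have hadj : G.Adj u' p1 ∧ G.Adj u' q1 := by
        rcases mp2 with e | e | e
        · rcases mr2 with e' | e' | e'
          · exact absurd (e.trans e'.symm) f13
          · exact ⟨e ▸ B1, e' ▸ B4.symm⟩
          · exact absurd (e'.trans eQ.symm).symm f23
        · rcases mr2 with e' | e' | e'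
          · exact ⟨e' ▸ B4.symm, e ▸ B1⟩
          · exact absurd (e.trans e'.symm) f13
          · exact absurd (e'.trans eQ.symm).symm f23
        · exact absurd (e.trans eQ.symm) f12
      exact h5c (saturates5_build A1 hadj.1.symm hadj.2 A3 A4
        e1u.symm hne e2u.symm e3u.symm dp1u' e12 e13 dq1u'.symm dr1u'.symm e23
        hu hu' np1 nq1 nr1)
  · intro a b hab hI
    refine ⟨key3 hS h4c h5c hu hu' hne hc hc4 huc hc' hc'4 huc' hab hI, ?_⟩
    exact key3 hS h4c h5c hu' hu hne.symm hc' hc'4 huc' hc hc4 huc hab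
      (by rw [Set.inter_comm]; exact hI)
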